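/- arXiv:1510.08479 — 4 statements merged into one kernel-verified Lean document; each statement's English description precedes it below -/
import Mathlib

section
/- Let φ, R, f, g : J → ℝ be differentiable on an open interval J with f' = cos ∘ φ, g' = sin ∘ φ, φ' nowhere zero, and suppose R = λ f·sin φ − λ g·cos φ and R' = −φ'·λ·(f·cos φ + g·sin φ) hold on J for a constant λ ≠ 0. Then f² + g² is constant on J. -/
/-- Subcase Ib: equal nonzero eigenvalues force f² + g² constant on J. -/
theorem stmt_6 (f g φ φ' R : ℝ → ℝ) (lam a b : ℝ) (J : Set ℝ) (hJ : J = Set.Ioo a b)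
    (hlam : lam ≠ 0)
    (hφ : ∀ s ∈ J, HasDerivAt φ (φ' s) s) (hφ' : ∀ s ∈ J, φ' s ≠ 0)
    (hf : ∀ s ∈ J, HasDerivAt f (Real.cos (φ s)) s)
    (hg : ∀ s ∈ J, HasDerivAt g (Real.sin (φ s)) s)
    (hReq : ∀ s ∈ J, R s = lam * f s * Real.sin (φ s) - lam * g s * Real.cos (φ s))
    (hR' : ∀ s ∈ J,
      HasDerivAt R (-(φ' s) * lam * (f s * Real.cos (φ s) + g s * Real.sin (φ s))) s) :
    ∀ s ∈ J, ∀ t ∈ J, (f s) ^ 2 + (g s) ^ 2 = (f t) ^ 2 + (g t) ^ 2 := by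
  have hJopen : IsOpen J := by rw [hJ]; exact isOpen_Ioo
  -- key: f cos φ + g sin φ = 0 on J
  have key : ∀ s ∈ J, f s * Real.cos (φ s) + g s * Real.sin (φ s) = 0 := by
    intro s hs
    have hh : HasDerivAt (fun x => lam * f x * Real.sin (φ x) - lam * g x * Real.cos (φ x))
        (φ' s * lam * (f s * Real.cos (φ s) + g s * Real.sin (φ s))) s := by
      have h1 := (((hf s hs).const_mul lam).mul ((hφ s hs).sin))
      have h2 := (((hg s hs).const_mul lam).mul ((hφ s hs).cos))
      have := h1.sub h2
      exact this.congr_deriv (by ring)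
    have hhR : HasDerivAt R
        (φ' s * lam * (f s * Real.cos (φ s) + g s * Real.sin (φ s))) s := by
      apply hh.congr_of_eventuallyEq
      filter_upwards [hJopen.mem_nhds hs] with x hx
      exact hReq x hx
    have := hhR.unique (hR' s hs)
    have hne : φ' s * lam ≠ 0 := mul_ne_zero (hφ' s hs) hlam
    have h2 : φ' s * lam * (2 * (f s * Real.cos (φ s) + g s * Real.sin (φ s))) = 0 := by
      linarith
    rcases mul_eq_zero.mp h2 with h3 | h3
    · exact absurd h3 hne
    · linarith
  -- F = f² + g² has zero derivative
  have hF : ∀ s ∈ J, HasDerivAt (fun x => (f x) ^ 2 + (g x) ^ 2) 0 s := by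
    intro s hs
    have h1 := ((hf s hs).pow 2).add ((hg s hs).pow 2)
    have := key s hs
    exact h1.congr_deriv (by norm_num; linear_combination 2 * this)
  intro s hs t ht
  rw [hJ] at hs ht
  rcases lt_trichotomy s t with h | h | h
  · have hsub : Set.Icc s t ⊆ Set.Ioo a b := fun x hx =>
      ⟨lt_of_lt_of_le hs.1 hx.1, lt_of_le_of_lt hx.2 ht.2⟩
    obtain ⟨c, hc, hc'⟩ := exists_hasDerivAt_eq_slope (fun x => (f x) ^ 2 + (g x) ^ 2)
      (fun _ => 0) h
      (ContinuousOn.add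
        (fun x hx => ((hf x (hJ ▸ hsub hx)).continuousAt.continuousWithinAt).pow 2)
        (fun x hx => ((hg x (hJ ▸ hsub hx)).continuousAt.continuousWithinAt).pow 2))
      (fun x hx => hF x (hJ ▸ hsub (Set.Ioo_subset_Icc_self hx)))
    have : (f t ^ 2 + g t ^ 2 - (f s ^ 2 + g s ^ 2)) / (t - s) = 0 := hc'.symm
    have hts : t - s ≠ 0 := sub_ne_zero.mpr h.ne'
    field_simp at this
    linarith
  · rw [h]
  · have hsub : Set.Icc t s ⊆ Set.Ioo a b := fun x hx =>
      ⟨lt_of_lt_of_le ht.1 hx.1, lt_of_le_of_lt hx.2 hs.2⟩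
    obtain ⟨c, hc, hc'⟩ := exists_hasDerivAt_eq_slope (fun x => (f x) ^ 2 + (g x) ^ 2)
      (fun _ => 0) h
      (ContinuousOn.add
        (fun x hx => ((hf x (hJ ▸ hsub hx)).continuousAt.continuousWithinAt).pow 2)
        (fun x hx => ((hg x (hJ ▸ hsub hx)).continuousAt.continuousWithinAt).pow 2))
      (fun x hx => hF x (hJ ▸ hsub (Set.Ioo_subset_Icc_self hx)))
    have : (f s ^ 2 + g s ^ 2 - (f t ^ 2 + g t ^ 2)) / (s - t) = 0 := hc'.symm
    have hts : s - t ≠ 0 := sub_ne_zero.mpr h.ne'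
    field_simp at this
    linarith
end

section
/- For real numbers λ ≠ μ and t = sin²φ ∈ (0,1), the resultant-type elimination of f and g from the two linear relations a f + b g = 0 and a₁ f/sin φ + b₁ g/cos φ = 0, where a = λ sin φ + (λ+μ)/((λ−μ) sin φ), b = 2μ/((λ−μ) cos φ) − μ cos φ, a₁ = λ(λ−μ)² t² + (λ−μ)(λμ − λ² + 3λ + μ) t − (λ+μ)(3λ−μ), b₁ = μ[(λ−μ)² t² + (λ−μ)(μ−λ+4) t − 2(λ+μ)], with (f,g) ≠ (0,0) and μ ≠ 0, implies λ(λ−μ)² t² + (λ−μ)(λμ − λ² + 5λ + μ − 2) t + (λ+μ)(μ − 3λ + 4) = 0. -/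
/-- Elimination of (f,g) ≠ (0,0) from the homogeneous 2×2 linear system gives the
quadratic relation in t = sin²φ. -/
theorem stmt_8 (lam mu t ph f g : ℝ) (hne : lam ≠ mu) (hmu : mu ≠ 0)
    (hsin : Real.sin ph ≠ 0) (hcos : Real.cos ph ≠ 0)
    (ht : t = Real.sin ph ^ 2) (ht' : t ∈ Set.Ioo (0:ℝ) 1)
    (hfg : (f, g) ≠ (0, 0))
    (h1 : (lam * Real.sin ph + (lam + mu) / ((lam - mu) * Real.sin ph)) * f +
          (2 * mu / ((lam - mu) * Real.cos ph) - mu * Real.cos ph) * g = 0)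
    (h2 : (lam * (lam - mu) ^ 2 * t ^ 2 + (lam - mu) * (lam * mu - lam ^ 2 + 3 * lam + mu) * t
            - (lam + mu) * (3 * lam - mu)) * (f / Real.sin ph) +
          (mu * ((lam - mu) ^ 2 * t ^ 2 + (lam - mu) * (mu - lam + 4) * t
            - 2 * (lam + mu))) * (g / Real.cos ph) = 0) :
    lam * (lam - mu) ^ 2 * t ^ 2 + (lam - mu) * (lam * mu - lam ^ 2 + 5 * lam + mu - 2) * t
      + (lam + mu) * (mu - 3 * lam + 4) = 0 := by
  have hlm : lam - mu ≠ 0 := sub_ne_zero.mpr hne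
  have hs2 : Real.sin ph ^ 2 = t := ht.symm
  have hc2 : Real.cos ph ^ 2 = 1 - t := by
    nlinarith [Real.sin_sq_add_cos_sq ph]
  set s := Real.sin ph with hsdef
  set c := Real.cos ph with hcdef
  -- abbreviations for coefficients
  set A1 : ℝ := lam * (lam - mu) ^ 2 * t ^ 2
      + (lam - mu) * (lam * mu - lam ^ 2 + 3 * lam + mu) * t
      - (lam + mu) * (3 * lam - mu) with hA1
  set B1 : ℝ := mu * ((lam - mu) ^ 2 * t ^ 2 + (lam - mu) * (mu - lam + 4) * t
      - 2 * (lam + mu)) with hB1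
  -- Cleared form of the first equation
  have H1 : ((lam * (lam - mu) * s ^ 2 + lam + mu) * c) * f
      + ((2 * mu - mu * (lam - mu) * c ^ 2) * s) * g = 0 := by
    have h1' := congrArg (fun x : ℝ => ((lam - mu) * s * c) * x) h1
    simp only [mul_zero] at h1'
    field_simp at h1'
    have key : ((lam - mu) ^ 2 * s * c) *
        (((lam * (lam - mu) * s ^ 2 + lam + mu) * c) * f
          + ((2 * mu - mu * (lam - mu) * c ^ 2) * s) * g) = 0 := by
      linear_combination ((lam - mu) ^ 2 * s * c) * h1'
    have hnz : ((lam - mu) ^ 2 * s * c) ≠ 0 :=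
      mul_ne_zero (mul_ne_zero (pow_ne_zero 2 hlm) hsin) hcos
    exact (mul_eq_zero.mp key).resolve_left hnz
  rw [hs2, hc2] at H1
  -- Cleared form of the second equation
  have H2 : (A1 * c) * f + (B1 * s) * g = 0 := by
    have h2' := congrArg (fun x : ℝ => (s * c) * x) h2
    simp only [mul_zero] at h2'
    field_simp at h2'
    linear_combination h2'
  -- the determinant
  set D : ℝ := (lam * (lam - mu) * t + lam + mu) * B1
      - (2 * mu - mu * (lam - mu) * (1 - t)) * A1 with hDdef
  have hDf : D * (c * f) = 0 := by
    rw [hDdef]; linear_combination B1 * H1 - (2 * mu - mu * (lam - mu) * (1 - t)) * H2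
  have hDg : D * (s * g) = 0 := by
    rw [hDdef]; linear_combination (lam * (lam - mu) * t + lam + mu) * H2 - A1 * H1
  have hD : D = 0 := by
    by_contra hDne
    have hf : f = 0 := by
      have := (mul_eq_zero.mp hDf).resolve_left hDne
      exact (mul_eq_zero.mp this).resolve_left hcos
    have hg : g = 0 := by
      have := (mul_eq_zero.mp hDg).resolve_left hDne
      exact (mul_eq_zero.mp this).resolve_left hsin
    exact hfg (by simp [hf, hg])
  -- D = mu * (lam - mu) * P, so P = 0
  have key : mu * (lam - mu) *
      (lam * (lam - mu) ^ 2 * t ^ 2 + (lam - mu) * (lam * mu - lam ^ 2 + 5 * lam + mu - 2) * t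
        + (lam + mu) * (mu - 3 * lam + 4)) = 0 := by
    rw [hDdef, hA1, hB1] at hD
    linear_combination hD
  have := (mul_eq_zero.mp key).resolve_left (mul_ne_zero hmu hlm)
  exact this
end

section
/- There are no real numbers λ, μ with λ ≠ μ such that the quadratic t ↦ λ(λ−μ)² t² + (λ−μ)(λμ − λ² + 5λ + μ − 2) t + (λ+μ)(μ − 3λ + 4) vanishes identically in t. -/
/-- No real λ ≠ μ make the Case II quadratic vanish identically in t. -/
theorem stmt_10 :
    ¬ ∃ (lam mu : ℝ), lam ≠ mu ∧ ∀ t : ℝ,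
      lam * (lam - mu) ^ 2 * t ^ 2 + (lam - mu) * (lam * mu - lam ^ 2 + 5 * lam + mu - 2) * t
        + (lam + mu) * (mu - 3 * lam + 4) = 0 := by
  rintro ⟨l, m, hne, h⟩
  have h0 := h 0
  have h1 := h 1
  have h2 := h (-1)
  have hA : l * (l - m) ^ 2 = 0 := by linarith
  have hB : (l - m) * (l * m - l ^ 2 + 5 * l + m - 2) = 0 := by linarith
  have hC : (l + m) * (m - 3 * l + 4) = 0 := by linarith
  have hd : l - m ≠ 0 := sub_ne_zero.mpr hne
  have hl : l = 0 := by
    have := mul_eq_zero.mp hA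
    rcases this with h | h
    · exact h
    · exact absurd (pow_eq_zero_iff (by norm_num) |>.mp h) hd
  subst hl
  have hB' : m * (m - 2) = 0 := by nlinarith [mul_ne_zero hd hd]
  have hm : m = 2 := by
    rcases mul_eq_zero.mp hB' with h | h
    · exact absurd (by simp [h]) hd
    · linarith
  subst hm
  norm_num at hC
end

section
/- Let S be a surface of revolution about the x₃-axis with arclength-parametrized profile curve (f(s), 0, g(s)), f > 0, f' = cos φ, g' = sin φ, φ' ≠ 0, sin φ ≠ 0 (no parabolic points). If there exist constants λ, μ with R sin φ − (cos φ/φ')R' = λ f and −R cos φ − (sin φ/φ')R' = μ g, where R = 1/φ' + f/sin φ, then either R ≡ 0 (so S is a minimal surface, hence a catenoid) or f² + g² is constant (so S is part of a sphere). -/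
lemma deriv_eq_zero_of_eqOn {J : Set ℝ} (hJo : IsOpen J) {F : ℝ → ℝ} {d t : ℝ}
    (h0 : ∀ u ∈ J, F u = 0) (ht : t ∈ J) (hd : HasDerivAt F d t) : d = 0 :=
  hd.unique ((hasDerivAt_const t 0).congr_of_eventuallyEq
    (by filter_upwards [hJo.mem_nhds ht] with u hu using h0 u hu))

lemma algI1 (lam mu Rv F Gv c s p DR : ℝ) (hp : p ≠ 0)
    (h1 : p*(Rv*s) - c*DR = lam*F*p)
    (h2 : -(p*(Rv*c)) - s*DR = mu*Gv*p)
    (pyth : s^2 + c^2 = 1) :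
    Rv = lam*F*s - mu*Gv*c := by
  have hI1p : p*(Rv - (lam*F*s - mu*Gv*c)) = 0 := by
    linear_combination s*h1 - c*h2 - p*Rv*pyth
  have := (mul_eq_zero.mp hI1p).resolve_left hp
  linarith [sub_eq_zero.mp this]

lemma algE0 (lam mu Rv F Gv c s p DR : ℝ) (hp : p ≠ 0) (hs : s ≠ 0)
    (h1 : p*(Rv*s) - c*DR = lam*F*p)
    (h2 : -(p*(Rv*c)) - s*DR = mu*Gv*p)
    (h4 : p*(Rv*s - F) = s)
    (hdr : DR = (lam-mu)*(c*s) + p*(lam*F*c + mu*Gv*s))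
    (pyth : s^2 + c^2 = 1) :
    2*(lam*(F*c) + mu*(Gv*s)) + (lam-mu)*(c*((lam*(F*s) - mu*(Gv*c))*s - F)) = 0 := by
  have hI1 : Rv = lam*F*s - mu*Gv*c := algI1 lam mu Rv F Gv c s p DR hp h1 h2 pyth
  have hI2 : DR = -(p*(lam*F*c + mu*Gv*s)) := by
    linear_combination -(c*h1) - s*h2 - DR*pyth
  have hI3 : (lam-mu)*(c*s) + 2*(p*(lam*F*c + mu*Gv*s)) = 0 := by
    linear_combination hI2 - hdr
  have hsE0 : s*(2*(lam*(F*c) + mu*(Gv*s)) + (lam-mu)*(c*((lam*(F*s) - mu*(Gv*c))*s - F))) = 0 := by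
    linear_combination (Rv*s - F)*hI3 - 2*(lam*F*c + mu*Gv*s)*h4 - (lam-mu)*c*s^2*hI1
  exact (mul_eq_zero.mp hsE0).resolve_left hs

lemma algE1 (lam mu Rv F Gv c s p : ℝ)
    (h4 : p*(Rv*s - F) = s)
    (hI1 : Rv = lam*F*s - mu*Gv*c)
    (hraw : (2*(lam*c^2 + mu*s^2) + (lam-mu)*(c^2*((lam-mu)*s^2 - 1)))
      + p*(2*(-(lam*F*s) + mu*Gv*c)
        + (lam-mu)*(-(s*((lam*F*s - mu*Gv*c)*s - F))
          + c*(s*(lam*F*c + mu*Gv*s) + c*(lam*F*s - mu*Gv*c)))) = 0) :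
    ((lam*F*s - mu*Gv*c)*s - F)*(2*(lam*c^2 + mu*s^2) + (lam-mu)*(c^2*((lam-mu)*s^2 - 1)))
      + s*(2*(-(lam*F*s) + mu*Gv*c)
        + (lam-mu)*(-(s*((lam*F*s - mu*Gv*c)*s - F))
          + c*(s*(lam*F*c + mu*Gv*s) + c*(lam*F*s - mu*Gv*c)))) = 0 := by
  linear_combination (Rv*s - F)*hraw
    - (2*(-(lam*F*s) + mu*Gv*c)
        + (lam-mu)*(-(s*((lam*F*s - mu*Gv*c)*s - F))
          + c*(s*(lam*F*c + mu*Gv*s) + c*(lam*F*s - mu*Gv*c))))*h4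
    - s*(2*(lam*c^2 + mu*s^2) + (lam-mu)*(c^2*((lam-mu)*s^2 - 1)))*hI1

lemma algDet (lam mu F Gv c s : ℝ) (hs : s ≠ 0) (hF : 0 < F)
    (hE0 : 2*(lam*(F*c) + mu*(Gv*s)) + (lam-mu)*(c*((lam*(F*s) - mu*(Gv*c))*s - F)) = 0)
    (hE1 : ((lam*F*s - mu*Gv*c)*s - F)*(2*(lam*c^2 + mu*s^2) + (lam-mu)*(c^2*((lam-mu)*s^2 - 1)))
      + s*(2*(-(lam*F*s) + mu*Gv*c)
        + (lam-mu)*(-(s*((lam*F*s - mu*Gv*c)*s - F))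
          + c*(s*(lam*F*c + mu*Gv*s) + c*(lam*F*s - mu*Gv*c)))) = 0)
    (pyth : s^2 + c^2 = 1) :
    mu*(6*mu + 2*lam - 6*lam*mu + 2*lam^2)
      + mu*(-2*mu + mu^2 + 2*lam + 4*lam*mu - lam*mu^2 - 5*lam^2 + 2*lam^2*mu - lam^3)*c^2
      + mu*(lam*mu^2 - 2*lam^2*mu + lam^3)*c^4 = 0 := by
  have hDf : (6*mu^2*s^3 + 4*mu^2*c^2*s + mu^3*c^2*s^3 + mu^3*c^4*s + 2*lam*mu*s^3
      + 4*lam*mu*c^2*s - 6*lam*mu^2*s^5 - 8*lam*mu^2*c^2*s^3 - 2*lam*mu^2*c^4*s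
      - lam*mu^3*c^2*s^5 - lam*mu^3*c^4*s^3 + 2*lam^2*mu*s^5 - lam^2*mu*c^2*s^3
      - 3*lam^2*mu*c^4*s + 2*lam^2*mu^2*c^2*s^5 + 2*lam^2*mu^2*c^4*s^3
      - lam^3*mu*c^2*s^5 - lam^3*mu*c^4*s^3) * F = 0 := by
    linear_combination (2*mu*c*s - 4*mu^2*c*s^3 - mu^3*c^3*s^3 + 2*lam*mu*c*s^3
      - 2*lam*mu*c^3*s + 2*lam*mu^2*c^3*s^3 - lam^2*mu*c^3*s^3)*hE0
      - (2*mu*s + mu^2*c^2*s - lam*mu*c^2*s)*hE1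
  have hD := (mul_eq_zero.mp hDf).resolve_right hF.ne'
  have hsq : s*(mu*(6*mu + 2*lam - 6*lam*mu + 2*lam^2)
      + mu*(-2*mu + mu^2 + 2*lam + 4*lam*mu - lam*mu^2 - 5*lam^2 + 2*lam^2*mu - lam^3)*c^2
      + mu*(lam*mu^2 - 2*lam^2*mu + lam^3)*c^4) = 0 := by
    linear_combination hD - (6*mu^2*s + mu^3*c^2*s + 2*lam*mu*s - 6*lam*mu^2*s
      - 6*lam*mu^2*s^3 - 2*lam*mu^2*c^2*s - lam*mu^3*c^2*s - lam*mu^3*c^2*s^3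
      + 2*lam^2*mu*s + 2*lam^2*mu*s^3 - 3*lam^2*mu*c^2*s + 2*lam^2*mu^2*c^2*s
      + 2*lam^2*mu^2*c^2*s^3 - lam^3*mu*c^2*s - lam^3*mu*c^2*s^3)*pyth
  exact (mul_eq_zero.mp hsq).resolve_left hs

/-- If K0 + K2 cos²+ K4 cos⁴ vanishes along φ on an open set where φ' ≠ 0 and sin φ ≠ 0,
then K4 = K2 = K0 = 0. -/
lemma quartic_vanish {J : Set ℝ} (hJo : IsOpen J) (φ φ' : ℝ → ℝ)
    (hφ : ∀ s ∈ J, HasDerivAt φ (φ' s) s) (hφ' : ∀ s ∈ J, φ' s ≠ 0)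
    (hsin : ∀ s ∈ J, Real.sin (φ s) ≠ 0)
    (K0 K2 K4 : ℝ)
    (h : ∀ s ∈ J, K0 + K2*Real.cos (φ s)^2 + K4*Real.cos (φ s)^4 = 0)
    {t : ℝ} (ht : t ∈ J) : K4 = 0 ∧ K2 = 0 ∧ K0 = 0 := by
  have step1 : ∀ s ∈ J, 2*K2*Real.cos (φ s) + 4*K4*Real.cos (φ s)^3 = 0 := by
    intro s hs
    have chain := (((((hφ s hs).cos.pow 2).const_mul K2).add
      (((hφ s hs).cos.pow 4).const_mul K4)).const_add K0)
    have hz := deriv_eq_zero_of_eqOn hJo (fun u hu => by simp only [Pi.add_apply, Pi.sub_apply, Pi.mul_apply, Pi.pow_apply]; linear_combination h u hu) hs chain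
    have hc : Real.sin (φ s)*(φ' s*(2*K2*Real.cos (φ s) + 4*K4*Real.cos (φ s)^3)) = 0 := by
      linear_combination -hz
    exact ((mul_eq_zero.mp ((mul_eq_zero.mp hc).resolve_left (hsin s hs))).resolve_left (hφ' s hs))
  have step2 : ∀ s ∈ J, 2*K2 + 12*K4*Real.cos (φ s)^2 = 0 := by
    intro s hs
    have chain := (((hφ s hs).cos.const_mul (2*K2)).add
      ((((hφ s hs).cos.pow 3)).const_mul (4*K4)))
    have hz := deriv_eq_zero_of_eqOn hJo (fun u hu => by simp only [Pi.add_apply, Pi.sub_apply, Pi.mul_apply, Pi.pow_apply]; linear_combination step1 u hu) hs chain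
    have hc : Real.sin (φ s)*(φ' s*(2*K2 + 12*K4*Real.cos (φ s)^2)) = 0 := by
      linear_combination -hz
    exact ((mul_eq_zero.mp ((mul_eq_zero.mp hc).resolve_left (hsin s hs))).resolve_left (hφ' s hs))
  have step3 : ∀ s ∈ J, K4*Real.cos (φ s) = 0 := by
    intro s hs
    have chain := ((((hφ s hs).cos.pow 2).const_mul (12*K4)).const_add (2*K2))
    have hz := deriv_eq_zero_of_eqOn hJo (fun u hu => by simp only [Pi.add_apply, Pi.sub_apply, Pi.mul_apply, Pi.pow_apply]; linear_combination step2 u hu) hs chain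
    have hc : Real.sin (φ s)*(φ' s*(24*(K4*Real.cos (φ s)))) = 0 := by
      linear_combination -hz
    have h24 := ((mul_eq_zero.mp ((mul_eq_zero.mp hc).resolve_left (hsin s hs))).resolve_left (hφ' s hs))
    linarith
  have hK4 : K4 = 0 := by
    have chain := (hφ t ht).cos.const_mul K4
    have hz := deriv_eq_zero_of_eqOn hJo (fun u hu => by linear_combination step3 u hu) ht chain
    have hc : K4*(Real.sin (φ t)*φ' t) = 0 := by linear_combination -hz
    exact (mul_eq_zero.mp hc).resolve_right
      (mul_ne_zero (hsin t ht) (hφ' t ht))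
  have hK2 : K2 = 0 := by
    have := step2 t ht; rw [hK4] at this; linarith
  have hK0 : K0 = 0 := by
    have := h t ht; rw [hK4, hK2] at this; linarith
  exact ⟨hK4, hK2, hK0⟩

lemma mu0_contra {J : Set ℝ} (hJo : IsOpen J) (φ φ' : ℝ → ℝ)
    (hφ : ∀ s ∈ J, HasDerivAt φ (φ' s) s) (hφ' : ∀ s ∈ J, φ' s ≠ 0)
    (hsin : ∀ s ∈ J, Real.sin (φ s) ≠ 0)
    (lam : ℝ) (hl : lam ≠ 0)
    (hA : ∀ s ∈ J, Real.cos (φ s)*(1 + lam*Real.sin (φ s)^2) = 0)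
    {t : ℝ} (ht : t ∈ J) : False := by
  have hB : ∀ s ∈ J, 2*lam*Real.cos (φ s)^2 - (1 + lam*Real.sin (φ s)^2) = 0 := by
    intro s hs
    have chain := (hφ s hs).cos.mul ((((hφ s hs).sin.pow 2).const_mul lam).const_add 1)
    have hz := deriv_eq_zero_of_eqOn hJo hA hs chain
    have hc : Real.sin (φ s)*(φ' s*(2*lam*Real.cos (φ s)^2 - (1 + lam*Real.sin (φ s)^2))) = 0 := by
      simp only [Pi.add_apply, Pi.sub_apply, Pi.mul_apply, Pi.pow_apply] at hz
      linear_combination hz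
    exact ((mul_eq_zero.mp ((mul_eq_zero.mp hc).resolve_left (hsin s hs))).resolve_left (hφ' s hs))
  have hCz : ∀ s ∈ J, Real.cos (φ s) = 0 := by
    intro s hs
    have chain := (((hφ s hs).cos.pow 2).const_mul (2*lam)).sub
      ((((hφ s hs).sin.pow 2).const_mul lam).const_add 1)
    have hz := deriv_eq_zero_of_eqOn hJo hB hs chain
    have hc : Real.sin (φ s)*(φ' s*(lam*(6*Real.cos (φ s)))) = 0 := by
      linear_combination -hz
    have := ((mul_eq_zero.mp ((mul_eq_zero.mp hc).resolve_left (hsin s hs))).resolve_left (hφ' s hs))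
    rcases mul_eq_zero.mp this with h' | h'
    · exact absurd h' hl
    · linarith
  have chain := (hφ t ht).cos
  have hz := deriv_eq_zero_of_eqOn hJo hCz ht chain
  have : Real.sin (φ t)*φ' t = 0 := by linear_combination -hz
  exact absurd this (mul_ne_zero (hsin t ht) (hφ' t ht))

/-- Main theorem (analytic form): a surface of revolution whose profile curve satisfies
the eigenvalue system P₁ = λf, P₂ = μg with R = 1/φ' + f/sin φ is a catenoid (R ≡ 0)
or part of a sphere (f² + g² constant). -/
theorem stmt_19 (f g φ φ' R : ℝ → ℝ) (a b : ℝ) (J : Set ℝ) (hJ : J = Set.Ioo a b)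
    (hφ : ∀ s ∈ J, HasDerivAt φ (φ' s) s) (hφ' : ∀ s ∈ J, φ' s ≠ 0)
    (hsin : ∀ s ∈ J, Real.sin (φ s) ≠ 0)
    (hfpos : ∀ s ∈ J, 0 < f s)
    (hf : ∀ s ∈ J, HasDerivAt f (Real.cos (φ s)) s)
    (hg : ∀ s ∈ J, HasDerivAt g (Real.sin (φ s)) s)
    (hRdef : ∀ s ∈ J, R s = 1 / φ' s + f s / Real.sin (φ s))
    (hRdiff : ∀ s ∈ J, DifferentiableAt ℝ R s)
    (heig : ∃ lam mu : ℝ, ∀ s ∈ J,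
      R s * Real.sin (φ s) - (Real.cos (φ s) / φ' s) * deriv R s = lam * f s ∧
      -(R s * Real.cos (φ s)) - (Real.sin (φ s) / φ' s) * deriv R s = mu * g s) :
    (∀ s ∈ J, R s = 0) ∨
    (∀ s ∈ J, ∀ t ∈ J, (f s) ^ 2 + (g s) ^ 2 = (f t) ^ 2 + (g t) ^ 2) := by
  obtain ⟨lam, mu, heig⟩ := heig
  have hJo : IsOpen J := hJ ▸ isOpen_Ioo
  -- cleared-denominator eigenvalue equations
  have h1' : ∀ s ∈ J, φ' s*(R s*Real.sin (φ s)) - Real.cos (φ s)*deriv R s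
      = lam*f s*φ' s := by
    intro s hs
    have h1 := (heig s hs).1
    have hp := hφ' s hs
    field_simp at h1; linear_combination h1
  have h2' : ∀ s ∈ J, -(φ' s*(R s*Real.cos (φ s))) - Real.sin (φ s)*deriv R s
      = mu*g s*φ' s := by
    intro s hs
    have h2 := (heig s hs).2
    have hp := hφ' s hs
    field_simp at h2; linear_combination h2
  have h4' : ∀ s ∈ J, φ' s*(R s*Real.sin (φ s) - f s) = Real.sin (φ s) := by
    intro s hs
    have h := hRdef s hs
    have hp := hφ' s hs
    have hsn := hsin s hs
    field_simp at h; linear_combination h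
  -- I1 : R = lam f sin - mu g cos
  have hI1 : ∀ s ∈ J, R s = lam*(f s*Real.sin (φ s)) - mu*(g s*Real.cos (φ s)) := by
    intro s hs
    have := algI1 lam mu (R s) (f s) (g s) (Real.cos (φ s)) (Real.sin (φ s)) (φ' s)
      (deriv R s) (hφ' s hs) (h1' s hs) (h2' s hs) (Real.sin_sq_add_cos_sq (φ s))
    linear_combination this
  -- deriv R in canonical form
  have hdr : ∀ s ∈ J, deriv R s = (lam-mu)*(Real.cos (φ s)*Real.sin (φ s))
      + φ' s*(lam*f s*Real.cos (φ s) + mu*g s*Real.sin (φ s)) := by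
    intro s hs
    have hC := (hφ s hs).cos
    have hS := (hφ s hs).sin
    have hGd := (((hf s hs).mul hS).const_mul lam).sub (((hg s hs).mul hC).const_mul mu)
    have hRd : HasDerivAt R _ s := hGd.congr_of_eventuallyEq
      (by filter_upwards [hJo.mem_nhds hs] with u hu using hI1 u hu)
    rw [hRd.deriv]; ring
  -- E0 identity
  have hE0 : ∀ s ∈ J, 2*(lam*(f s*Real.cos (φ s)) + mu*(g s*Real.sin (φ s)))
      + (lam-mu)*(Real.cos (φ s)*((lam*(f s*Real.sin (φ s)) - mu*(g s*Real.cos (φ s)))*Real.sin (φ s) - f s)) = 0 := by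
    intro s hs
    exact algE0 lam mu (R s) (f s) (g s) (Real.cos (φ s)) (Real.sin (φ s)) (φ' s)
      (deriv R s) (hφ' s hs) (hsin s hs) (h1' s hs) (h2' s hs) (h4' s hs)
      (by linear_combination hdr s hs) (Real.sin_sq_add_cos_sq (φ s))
  by_cases hlm : lam = mu
  · -- k = 0 : sphere or catenoid
    by_cases hl0 : lam = 0
    · left
      intro s hs
      have hmu0 : mu = 0 := hl0 ▸ hlm.symm
      rw [hI1 s hs, hl0, hmu0]; ring
    · right
      have hfg : ∀ s ∈ J, f s*Real.cos (φ s) + g s*Real.sin (φ s) = 0 := by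
        intro s hs
        have h := hE0 s hs
        rw [← hlm] at h
        have h2 : lam*((f s*Real.cos (φ s) + g s*Real.sin (φ s))*2) = 0 := by
          linear_combination h
        have := (mul_eq_zero.mp h2).resolve_left hl0
        linarith
      have hQd : ∀ x ∈ J, HasDerivAt (fun y => f y^2 + g y^2)
          (2*(f x*Real.cos (φ x) + g x*Real.sin (φ x))) x := by
        intro x hx
        have h := ((hf x hx).pow 2).add ((hg x hx).pow 2)
        refine h.congr_deriv ?_
        push_cast; ring
      have key : ∀ s ∈ J, ∀ t ∈ J, s < t → f s^2 + g s^2 = f t^2 + g t^2 := by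
        intro s hs t ht hst
        have hsub : Set.Icc s t ⊆ J := by
          rw [hJ] at hs ht ⊢
          intro x hx
          exact ⟨lt_of_lt_of_le hs.1 hx.1, lt_of_le_of_lt hx.2 ht.2⟩
        obtain ⟨x, hx, hslope⟩ := exists_hasDerivAt_eq_slope (fun y => f y^2 + g y^2)
          (fun x => 2*(f x*Real.cos (φ x) + g x*Real.sin (φ x))) hst
          (fun x hx => (hQd x (hsub hx)).continuousAt.continuousWithinAt)
          (fun x hx => hQd x (hsub ⟨le_of_lt hx.1, le_of_lt hx.2⟩))
        have hx' : x ∈ J := hsub ⟨le_of_lt hx.1, le_of_lt hx.2⟩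
        rw [hfg x hx'] at hslope
        have htne : t - s ≠ 0 := sub_ne_zero.mpr hst.ne'
        field_simp at hslope
        linarith
      intro s hs t ht
      rcases lt_trichotomy s t with h | h | h
      · exact key s hs t ht h
      · rw [h]
      · exact (key t ht s hs h).symm
  · -- lam ≠ mu : derive a contradiction (J must then be empty)
    rcases Set.eq_empty_or_nonempty J with hemp | ⟨t₀, ht₀⟩
    · left; intro s hs; rw [hemp] at hs; exact absurd hs (Set.notMem_empty s)
    exfalso
    by_cases hmu : mu = 0
    · -- mu = 0 case
      have hl : lam ≠ 0 := fun h => hlm (h.trans hmu.symm)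
      have hA : ∀ s ∈ J, Real.cos (φ s)*(1 + lam*Real.sin (φ s)^2) = 0 := by
        intro s hs
        have h := hE0 s hs
        rw [hmu] at h
        have h2 : lam*(f s*(Real.cos (φ s)*(1 + lam*Real.sin (φ s)^2))) = 0 := by
          linear_combination h
        have h3 := (mul_eq_zero.mp h2).resolve_left hl
        exact (mul_eq_zero.mp h3).resolve_left (hfpos s hs).ne'
      exact mu0_contra hJo φ φ' hφ hφ' hsin lam hl hA ht₀
    · -- mu ≠ 0 case : determinant argument
      have hE1raw : ∀ s ∈ J,
          (2*(lam*Real.cos (φ s)^2 + mu*Real.sin (φ s)^2)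
            + (lam-mu)*(Real.cos (φ s)^2*((lam-mu)*Real.sin (φ s)^2 - 1)))
          + φ' s*(2*(-(lam*f s*Real.sin (φ s)) + mu*g s*Real.cos (φ s))
            + (lam-mu)*(-(Real.sin (φ s)*((lam*f s*Real.sin (φ s) - mu*g s*Real.cos (φ s))*Real.sin (φ s) - f s))
              + Real.cos (φ s)*(Real.sin (φ s)*(lam*f s*Real.cos (φ s) + mu*g s*Real.sin (φ s))
                + Real.cos (φ s)*(lam*f s*Real.sin (φ s) - mu*g s*Real.cos (φ s))))) = 0 := by
        intro s hs
        have hC := (hφ s hs).cos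
        have hS := (hφ s hs).sin
        have hft := hf s hs
        have hgt := hg s hs
        have chain := ((((hft.mul hC).const_mul lam).add ((hgt.mul hS).const_mul mu)).const_mul 2).add
          ((hC.mul ((((((hft.mul hS).const_mul lam).sub ((hgt.mul hC).const_mul mu)).mul hS).sub hft))).const_mul (lam-mu))
        have hz := deriv_eq_zero_of_eqOn hJo hE0 hs chain
        simp only [Pi.add_apply, Pi.sub_apply, Pi.mul_apply, Pi.pow_apply] at hz
        linear_combination hz
      have hE1 : ∀ s ∈ J,
          ((lam*f s*Real.sin (φ s) - mu*g s*Real.cos (φ s))*Real.sin (φ s) - f s)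
            *(2*(lam*Real.cos (φ s)^2 + mu*Real.sin (φ s)^2)
              + (lam-mu)*(Real.cos (φ s)^2*((lam-mu)*Real.sin (φ s)^2 - 1)))
          + Real.sin (φ s)*(2*(-(lam*f s*Real.sin (φ s)) + mu*g s*Real.cos (φ s))
            + (lam-mu)*(-(Real.sin (φ s)*((lam*f s*Real.sin (φ s) - mu*g s*Real.cos (φ s))*Real.sin (φ s) - f s))
              + Real.cos (φ s)*(Real.sin (φ s)*(lam*f s*Real.cos (φ s) + mu*g s*Real.sin (φ s))
                + Real.cos (φ s)*(lam*f s*Real.sin (φ s) - mu*g s*Real.cos (φ s))))) = 0 := by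
        intro s hs
        exact algE1 lam mu (R s) (f s) (g s) (Real.cos (φ s)) (Real.sin (φ s)) (φ' s)
          (h4' s hs) (by linear_combination hI1 s hs) (hE1raw s hs)
      have hKs : ∀ s ∈ J, mu*(6*mu + 2*lam - 6*lam*mu + 2*lam^2)
          + mu*(-2*mu + mu^2 + 2*lam + 4*lam*mu - lam*mu^2 - 5*lam^2 + 2*lam^2*mu - lam^3)*Real.cos (φ s)^2
          + mu*(lam*mu^2 - 2*lam^2*mu + lam^3)*Real.cos (φ s)^4 = 0 := by
        intro s hs
        exact algDet lam mu (f s) (g s) (Real.cos (φ s)) (Real.sin (φ s)) (hsin s hs)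
          (hfpos s hs) (hE0 s hs) (hE1 s hs) (Real.sin_sq_add_cos_sq (φ s))
      obtain ⟨hK4, hK2, hK0⟩ := quartic_vanish hJo φ φ' hφ hφ' hsin _ _ _ hKs ht₀
      have hlam0 : lam = 0 := by
        have h2 : mu*(lam*(lam-mu)^2) = 0 := by linear_combination hK4
        have h3 := (mul_eq_zero.mp h2).resolve_left hmu
        rcases mul_eq_zero.mp h3 with h4 | h4
        · exact h4
        · exact absurd (sub_eq_zero.mp (sq_eq_zero_iff.mp h4)) hlm
      rw [hlam0] at hK0
      have : mu*(6*mu) = 0 := by linear_combination hK0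
      have h5 := (mul_eq_zero.mp this).resolve_left hmu
      have : mu = 0 := by linarith
      exact hmu this
end
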